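/- Let g(W) = f(W) + (γ/2)‖W‖_F² where f(W) = (1/(4n)) Σ_j (x_j^T W A W^T x_j − y_j)² (quartic-in-W two-layer loss with fixed diagonal sign matrix A). Suppose ‖x_j‖₂ ≤ B and |y_j| ≤ Y for all j. Then on the set {W : ‖W‖_F² ≤ Γ}, the gradient ∇g is Lipschitz with constant 3B⁴Γ + YB² + γ, i.e., ‖∇g(U) − ∇g(V)‖_F ≤ (3B⁴Γ + YB² + γ)‖U − V‖_F for all U, V in this set. -/

import Mathlib

open Finset Matrix

namespace Stmt13Aux
attribute [local instance] Matrix.frobeniusSeminormedAddCommGroup Matrix.frobeniusNormedSpace Matrix.frobeniusIsBoundedSMul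

variable {d r : ℕ} {A : Matrix (Fin r) (Fin r) ℝ}

lemma fnorm_eq (M : Matrix (Fin d) (Fin r) ℝ) :
    ‖M‖ = Real.sqrt (∑ i, ∑ k, M i k ^ 2) := by
  rw [Matrix.frobenius_norm_def, Real.sqrt_eq_rpow]
  congr 1
  refine Finset.sum_congr rfl fun i _ => Finset.sum_congr rfl fun k _ => ?_
  rw [show ((2:ℝ) = ((2:ℕ):ℝ)) by norm_num, Real.rpow_natCast, Real.norm_eq_abs, sq_abs]

lemma vecMulVec_mul_eq (u : Fin d → ℝ) (M : Matrix (Fin d) (Fin r) ℝ) :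
    Matrix.vecMulVec u u * M = Matrix.vecMulVec u (Matrix.vecMul u M) := by
  ext i k
  simp [Matrix.mul_apply, Matrix.vecMulVec_apply, Matrix.vecMul, dotProduct,
    Finset.mul_sum, mul_assoc]

lemma fnorm_vecMulVec (u : Fin d → ℝ) (v : Fin r → ℝ) :
    ‖Matrix.vecMulVec u v‖ = Real.sqrt (∑ i, u i ^ 2) * Real.sqrt (∑ k, v k ^ 2) := by
  rw [fnorm_eq, ← Real.sqrt_mul (by positivity)]
  congr 1
  simp [Matrix.vecMulVec_apply, mul_pow, ← Finset.sum_mul, ← Finset.mul_sum, Finset.sum_mul]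

lemma vnorm_vecMul_le (u : Fin d → ℝ) (M : Matrix (Fin d) (Fin r) ℝ) :
    Real.sqrt (∑ k, Matrix.vecMul u M k ^ 2) ≤ Real.sqrt (∑ i, u i ^ 2) * ‖M‖ := by
  rw [fnorm_eq, ← Real.sqrt_mul (by positivity)]
  apply Real.sqrt_le_sqrt
  rw [show (∑ i, ∑ k, M i k ^ 2) = ∑ k, ∑ i, M i k ^ 2 from Finset.sum_comm,
    Finset.mul_sum]
  refine Finset.sum_le_sum fun k _ => ?_
  simpa [Matrix.vecMul, dotProduct] using
    Finset.sum_mul_sq_le_sq_mul_sq Finset.univ u (fun i => M i k)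

lemma mul_diag_apply (hAdiag : A.IsDiag) (M : Matrix (Fin d) (Fin r) ℝ) (i : Fin d) (k : Fin r) :
    (M * A) i k = M i k * A k k := by
  rw [Matrix.mul_apply]
  rw [Finset.sum_eq_single k]
  · intro b _ hb
    rw [hAdiag hb, mul_zero]
  · simp

lemma fnorm_mul_diag (hAdiag : A.IsDiag) (hA : ∀ i, A i i = 1 ∨ A i i = -1)
    (M : Matrix (Fin d) (Fin r) ℝ) : ‖M * A‖ = ‖M‖ := by
  rw [show ‖M * A‖ = _ from Matrix.frobenius_norm_def _, Matrix.frobenius_norm_def]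
  congr 1
  refine Finset.sum_congr rfl fun i _ => Finset.sum_congr rfl fun k _ => ?_
  rw [mul_diag_apply hAdiag]
  rcases hA k with h | h <;> simp [h, norm_mul]

lemma q_repr (hAdiag : A.IsDiag) (x : Fin d → ℝ) (W : Matrix (Fin d) (Fin r) ℝ) :
    x ⬝ᵥ (W * A * Wᵀ).mulVec x = ∑ k, A k k * (Matrix.vecMul x W) k ^ 2 := by
  rw [Matrix.dotProduct_mulVec, ← Matrix.vecMul_vecMul, ← Matrix.vecMul_vecMul,
    Matrix.vecMul_transpose]
  have h : Matrix.vecMul (Matrix.vecMul x W) A = fun k => (Matrix.vecMul x W) k * A k k := by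
    funext k
    rw [Matrix.vecMul, dotProduct]
    rw [Finset.sum_eq_single k]
    · intro b _ hb
      rw [hAdiag hb, mul_zero]
    · simp
  rw [h]
  rw [show W.mulVec (fun k => (Matrix.vecMul x W) k * A k k) ⬝ᵥ x
      = x ⬝ᵥ W.mulVec (fun k => (Matrix.vecMul x W) k * A k k) from dotProduct_comm _ _,
    Matrix.dotProduct_mulVec, dotProduct]
  refine Finset.sum_congr rfl fun k _ => ?_
  ring

end Stmt13Aux

section Main

attribute [local instance] Matrix.frobeniusSeminormedAddCommGroup Matrix.frobeniusNormedSpace Matrix.frobeniusIsBoundedSMul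

set_option maxHeartbeats 1600000 in
open Stmt13Aux in
/-- The gradient of `g(W) = (1/(4n))∑_j (x_jᵀ W A Wᵀ x_j − y_j)² + (γ/2)‖W‖_F²` is
Lipschitz with constant `3B⁴Γ + YB² + γ` on the set `{W : ‖W‖_F² ≤ Γ}`. -/
theorem stmt_13 (d r n : ℕ) (hn : 0 < n)
    (A : Matrix (Fin r) (Fin r) ℝ) (hAdiag : A.IsDiag)
    (hA : ∀ i, A i i = 1 ∨ A i i = -1)
    (x : Fin n → Fin d → ℝ) (y : Fin n → ℝ)
    (B Y Γ γ : ℝ) (hγ : 0 ≤ γ)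
    (hB : ∀ j, Real.sqrt (∑ k, x j k ^ 2) ≤ B)
    (hY : ∀ j, |y j| ≤ Y)
    (Grad : Matrix (Fin d) (Fin r) ℝ → Matrix (Fin d) (Fin r) ℝ)
    (hGrad : ∀ W, Grad W =
      (1 / (n : ℝ)) •
        (∑ j, ((x j ⬝ᵥ (W * A * Wᵀ).mulVec (x j)) - y j) •
          (Matrix.vecMulVec (x j) (x j) * W * A)) + γ • W)
    (U V : Matrix (Fin d) (Fin r) ℝ)
    (hU : ∑ i, ∑ k, U i k ^ 2 ≤ Γ) (hV : ∑ i, ∑ k, V i k ^ 2 ≤ Γ) :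
    Real.sqrt (∑ i, ∑ k, (Grad U - Grad V) i k ^ 2) ≤
      (3 * B ^ 4 * Γ + Y * B ^ 2 + γ) * Real.sqrt (∑ i, ∑ k, (U - V) i k ^ 2) := by
  rw [← fnorm_eq, ← fnorm_eq]
  set D : Matrix (Fin d) (Fin r) ℝ := U - V with hD
  -- basic nonnegativity facts
  have hB0 : 0 ≤ B := le_trans (Real.sqrt_nonneg _) (hB ⟨0, hn⟩)
  have hY0 : 0 ≤ Y := le_trans (abs_nonneg _) (hY ⟨0, hn⟩)
  have hΓ0 : 0 ≤ Γ := le_trans (by positivity) hU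
  have hsΓ : Real.sqrt Γ ^ 2 = Γ := Real.sq_sqrt hΓ0
  have hsΓ0 : 0 ≤ Real.sqrt Γ := Real.sqrt_nonneg Γ
  have hUn : ‖U‖ ≤ Real.sqrt Γ := by rw [fnorm_eq]; exact Real.sqrt_le_sqrt hU
  have hVn : ‖V‖ ≤ Real.sqrt Γ := by rw [fnorm_eq]; exact Real.sqrt_le_sqrt hV
  have hD0 : (0:ℝ) ≤ ‖D‖ := norm_nonneg _
  -- bound on ‖P_j M A‖
  have hPM : ∀ (j : Fin n) (M : Matrix (Fin d) (Fin r) ℝ),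
      ‖Matrix.vecMulVec (x j) (x j) * M * A‖ ≤ B ^ 2 * ‖M‖ := by
    intro j M
    rw [fnorm_mul_diag hAdiag hA, vecMulVec_mul_eq, fnorm_vecMulVec]
    have h1 := vnorm_vecMul_le (x j) M
    have h2 := hB j
    calc Real.sqrt (∑ k, x j k ^ 2) * Real.sqrt (∑ k, Matrix.vecMul (x j) M k ^ 2)
        ≤ B * (Real.sqrt (∑ k, x j k ^ 2) * ‖M‖) :=
          mul_le_mul h2 h1 (Real.sqrt_nonneg _) hB0
      _ ≤ B * (B * ‖M‖) := by
          have := mul_le_mul_of_nonneg_right h2 (norm_nonneg M)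
          nlinarith
      _ = B ^ 2 * ‖M‖ := by ring
  -- bound on |q_W|
  have hq : ∀ (j : Fin n) (W : Matrix (Fin d) (Fin r) ℝ), ‖W‖ ≤ Real.sqrt Γ →
      |x j ⬝ᵥ (W * A * Wᵀ).mulVec (x j)| ≤ B ^ 2 * Γ := by
    intro j W hW
    rw [q_repr hAdiag]
    have h1 : |∑ k, A k k * (Matrix.vecMul (x j) W) k ^ 2|
        ≤ ∑ k, (Matrix.vecMul (x j) W) k ^ 2 := by
      refine (Finset.abs_sum_le_sum_abs _ _).trans (Finset.sum_le_sum fun k _ => ?_)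
      rcases hA k with h | h <;>
        simp [h, abs_of_nonneg (sq_nonneg ((Matrix.vecMul (x j) W) k))]
    have h3 := vnorm_vecMul_le (x j) W
    have h4 : Real.sqrt (∑ k, Matrix.vecMul (x j) W k ^ 2) ^ 2
        = ∑ k, Matrix.vecMul (x j) W k ^ 2 := Real.sq_sqrt (by positivity)
    have h5 := hB j
    have p1 : Real.sqrt (∑ k, Matrix.vecMul (x j) W k ^ 2) ^ 2
        ≤ (Real.sqrt (∑ k, x j k ^ 2) * ‖W‖) ^ 2 :=
      pow_le_pow_left₀ (Real.sqrt_nonneg _) h3 2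
    have p3 : Real.sqrt (∑ k, x j k ^ 2) ^ 2 ≤ B ^ 2 :=
      pow_le_pow_left₀ (Real.sqrt_nonneg _) h5 2
    have p4 : ‖W‖ ^ 2 ≤ Real.sqrt Γ ^ 2 := pow_le_pow_left₀ (norm_nonneg _) hW 2
    have p5 := mul_le_mul p3 p4 (sq_nonneg _) (sq_nonneg B)
    rw [hsΓ] at p5
    nlinarith [sq_nonneg (Real.sqrt (∑ k, x j k ^ 2)), sq_nonneg ‖W‖]
  -- bound on |q_U - q_V|
  have hqd : ∀ j : Fin n,
      |(x j ⬝ᵥ (U * A * Uᵀ).mulVec (x j)) - (x j ⬝ᵥ (V * A * Vᵀ).mulVec (x j))|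
        ≤ 2 * B ^ 2 * Real.sqrt Γ * ‖D‖ := by
    intro j
    rw [q_repr hAdiag, q_repr hAdiag, ← Finset.sum_sub_distrib]
    set sU : Fin r → ℝ := Matrix.vecMul (x j) U with hsU
    set sV : Fin r → ℝ := Matrix.vecMul (x j) V with hsV
    set sD : Fin r → ℝ := Matrix.vecMul (x j) D with hsD2
    set sS : Fin r → ℝ := Matrix.vecMul (x j) (U + V) with hsS
    have hsd : ∀ k, sU k - sV k = sD k := by
      intro k; simp [hsU, hsV, hsD2, hD, Matrix.vecMul_sub]
    have hss : ∀ k, sU k + sV k = sS k := by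
      intro k; simp [hsU, hsV, hsS, Matrix.vecMul_add]
    have step1 : |∑ k, (A k k * sU k ^ 2 - A k k * sV k ^ 2)| ≤ ∑ k, |sD k| * |sS k| := by
      refine (Finset.abs_sum_le_sum_abs _ _).trans (Finset.sum_le_sum fun k _ => ?_)
      have he : A k k * sU k ^ 2 - A k k * sV k ^ 2
          = A k k * ((sU k - sV k) * (sU k + sV k)) := by ring
      rw [he, hsd, hss, abs_mul, abs_mul]
      rcases hA k with h | h <;> simp [h]
    have step2 : ∑ k, |sD k| * |sS k|
        ≤ Real.sqrt (∑ k, sD k ^ 2) * Real.sqrt (∑ k, sS k ^ 2) := by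
      rw [← Real.sqrt_mul (by positivity)]
      rw [Real.le_sqrt (by positivity) (by positivity)]
      calc (∑ k, |sD k| * |sS k|) ^ 2 ≤ (∑ k, |sD k| ^ 2) * ∑ k, |sS k| ^ 2 :=
            Finset.sum_mul_sq_le_sq_mul_sq _ _ _
        _ = (∑ k, sD k ^ 2) * ∑ k, sS k ^ 2 := by simp [sq_abs]
    have h6 := vnorm_vecMul_le (x j) D
    have h7 := vnorm_vecMul_le (x j) (U + V)
    have h8 : ‖U + V‖ ≤ 2 * Real.sqrt Γ := by
      calc ‖U + V‖ ≤ ‖U‖ + ‖V‖ := norm_add_le _ _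
        _ ≤ 2 * Real.sqrt Γ := by linarith
    have h9 := hB j
    have h10 : Real.sqrt (∑ k, sD k ^ 2) ≤ B * ‖D‖ := by
      refine h6.trans ?_
      exact mul_le_mul_of_nonneg_right h9 hD0
    have h11 : Real.sqrt (∑ k, sS k ^ 2) ≤ B * (2 * Real.sqrt Γ) := by
      refine h7.trans ?_
      exact mul_le_mul h9 h8 (norm_nonneg _) hB0
    refine step1.trans (step2.trans ?_)
    calc Real.sqrt (∑ k, sD k ^ 2) * Real.sqrt (∑ k, sS k ^ 2)
        ≤ (B * ‖D‖) * (B * (2 * Real.sqrt Γ)) :=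
          mul_le_mul h10 h11 (Real.sqrt_nonneg _) (by positivity)
      _ = 2 * B ^ 2 * Real.sqrt Γ * ‖D‖ := by ring
  -- algebraic decomposition of each summand
  have key : ∀ j : Fin n,
      ((x j ⬝ᵥ (U * A * Uᵀ).mulVec (x j)) - y j) • (Matrix.vecMulVec (x j) (x j) * U * A)
        - ((x j ⬝ᵥ (V * A * Vᵀ).mulVec (x j)) - y j) • (Matrix.vecMulVec (x j) (x j) * V * A)
      = ((x j ⬝ᵥ (U * A * Uᵀ).mulVec (x j)) - y j) • (Matrix.vecMulVec (x j) (x j) * D * A)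
        + ((x j ⬝ᵥ (U * A * Uᵀ).mulVec (x j)) - (x j ⬝ᵥ (V * A * Vᵀ).mulVec (x j))) •
            (Matrix.vecMulVec (x j) (x j) * V * A) := by
    intro j
    rw [hD, Matrix.mul_sub, Matrix.sub_mul]
    module
  -- decomposition of the gradient difference
  have hsplit : Grad U - Grad V =
      (1 / (n:ℝ)) • (∑ j,
        (((x j ⬝ᵥ (U * A * Uᵀ).mulVec (x j)) - y j) • (Matrix.vecMulVec (x j) (x j) * U * A)
          - ((x j ⬝ᵥ (V * A * Vᵀ).mulVec (x j)) - y j) •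
              (Matrix.vecMulVec (x j) (x j) * V * A))) + γ • D := by
    rw [hGrad, hGrad, Finset.sum_sub_distrib, hD]
    module
  -- per-term bound
  have hterm : ∀ j : Fin n,
      ‖((x j ⬝ᵥ (U * A * Uᵀ).mulVec (x j)) - y j) • (Matrix.vecMulVec (x j) (x j) * U * A)
        - ((x j ⬝ᵥ (V * A * Vᵀ).mulVec (x j)) - y j) • (Matrix.vecMulVec (x j) (x j) * V * A)‖
      ≤ (3 * B ^ 4 * Γ + Y * B ^ 2) * ‖D‖ := by
    intro j
    rw [key j]
    refine (norm_add_le _ _).trans ?_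
    rw [norm_smul, norm_smul, Real.norm_eq_abs, Real.norm_eq_abs]
    have h1 : |(x j ⬝ᵥ (U * A * Uᵀ).mulVec (x j)) - y j| ≤ B ^ 2 * Γ + Y := by
      refine (abs_sub _ _).trans ?_
      have := hq j U hUn
      have := hY j
      linarith
    have h2 : ‖Matrix.vecMulVec (x j) (x j) * D * A‖ ≤ B ^ 2 * ‖D‖ := hPM j D
    have h3 := hqd j
    have h4 : ‖Matrix.vecMulVec (x j) (x j) * V * A‖ ≤ B ^ 2 * Real.sqrt Γ := by
      refine (hPM j V).trans ?_
      exact mul_le_mul_of_nonneg_left hVn (by positivity)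
    have p1 := mul_le_mul h1 h2 (norm_nonneg _) (by positivity)
    have p2 := mul_le_mul h3 h4 (norm_nonneg _) (by positivity)
    have p3 : (2 * B ^ 2 * Real.sqrt Γ * ‖D‖) * (B ^ 2 * Real.sqrt Γ)
        = 2 * B ^ 4 * Γ * ‖D‖ := by
      linear_combination (2 * B ^ 4 * ‖D‖) * Real.mul_self_sqrt hΓ0
    rw [p3] at p2
    refine (add_le_add p1 p2).trans ?_
    nlinarith
  -- assemble
  rw [hsplit]
  have hnn : (0:ℝ) < (n:ℝ) := by exact_mod_cast hn
  have hSb : ‖∑ j,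
      (((x j ⬝ᵥ (U * A * Uᵀ).mulVec (x j)) - y j) • (Matrix.vecMulVec (x j) (x j) * U * A)
        - ((x j ⬝ᵥ (V * A * Vᵀ).mulVec (x j)) - y j) •
            (Matrix.vecMulVec (x j) (x j) * V * A))‖
      ≤ (n:ℝ) * ((3 * B ^ 4 * Γ + Y * B ^ 2) * ‖D‖) := by
    refine (norm_sum_le _ _).trans ?_
    refine (Finset.sum_le_sum fun j _ => hterm j).trans_eq ?_
    simp [Finset.sum_const, Finset.card_univ, nsmul_eq_mul]
  refine (norm_add_le _ _).trans ?_
  rw [norm_smul, norm_smul, Real.norm_eq_abs, Real.norm_eq_abs,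
    abs_of_nonneg (by positivity : (0:ℝ) ≤ 1 / (n:ℝ)), abs_of_nonneg hγ]
  have hmain : (1 / (n:ℝ)) * ‖∑ j,
      (((x j ⬝ᵥ (U * A * Uᵀ).mulVec (x j)) - y j) • (Matrix.vecMulVec (x j) (x j) * U * A)
        - ((x j ⬝ᵥ (V * A * Vᵀ).mulVec (x j)) - y j) •
            (Matrix.vecMulVec (x j) (x j) * V * A))‖
      ≤ (3 * B ^ 4 * Γ + Y * B ^ 2) * ‖D‖ := by
    refine (mul_le_mul_of_nonneg_left hSb (by positivity : (0:ℝ) ≤ 1 / (n:ℝ))).trans_eq ?_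
    field_simp
  linarith

end Main
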